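/- Let G be a connected graph on n ≥ 2 vertices. Then λ₁(D(G)) ≤ √(2(n−1)W⁽²⁾(G)/n), with equality if and only if G is the complete graph K_n, where W⁽²⁾(G) = Σ_{i<j} d_{ij}(G)² is the sum of the squares of the distances between all unordered pairs of vertices. -/

import Mathlib

open SimpleGraph Finset

/-- The distance matrix of a graph: the `(i,j)` entry is the graph distance from `i` to `j`. -/
noncomputable def distMatrix {V : Type*} [Fintype V] (G : SimpleGraph V) : Matrix V V ℝ :=
  fun i j => (G.dist i j : ℝ)

/-- The distance spectral radius `λ₁(D(G))`: the largest eigenvalue of the distance matrix. -/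
noncomputable def distSpecRad {V : Type*} [Fintype V] (G : SimpleGraph V) : ℝ :=
  sSup {μ : ℝ | ∃ v : V → ℝ, v ≠ 0 ∧ (distMatrix G).mulVec v = μ • v}

/-- The join `G ∨ H` of two graphs: all edges between the parts are added. -/
def graphJoin {α β : Type*} (G : SimpleGraph α) (H : SimpleGraph β) :
    SimpleGraph (α ⊕ β) where
  Adj x y :=
    match x, y with
    | Sum.inl a, Sum.inl a' => G.Adj a a'
    | Sum.inr b, Sum.inr b' => H.Adj b b'
    | Sum.inl _, Sum.inr _ => True
    | Sum.inr _, Sum.inl _ => True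
  symm := ⟨by rintro (a | a) (b | b) h <;> first | exact G.symm h | exact H.symm h | exact G.adj_symm h | exact H.adj_symm h | trivial⟩
  loopless := ⟨by rintro (a | a) h <;> first | exact G.loopless a h | exact H.loopless a h | exact G.irrefl h | exact H.irrefl h⟩

/-- The disjoint union `G + H` of two graphs. -/
def graphSum {α β : Type*} (G : SimpleGraph α) (H : SimpleGraph β) :
    SimpleGraph (α ⊕ β) where
  Adj x y :=
    match x, y with
    | Sum.inl a, Sum.inl a' => G.Adj a a'
    | Sum.inr b, Sum.inr b' => H.Adj b b'
    | _, _ => False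
  symm := ⟨by rintro (a | a) (b | b) h <;> first | exact G.symm h | exact H.symm h | exact G.adj_symm h | exact H.adj_symm h | exact h⟩
  loopless := ⟨by rintro (a | a) h <;> first | exact G.loopless a h | exact H.loopless a h | exact G.irrefl h | exact H.irrefl h⟩

/-- `m` pairwise disjoint copies of the complete graph `K_p`. -/
def repK (m p : ℕ) : SimpleGraph (Fin m × Fin p) where
  Adj x y := x.1 = y.1 ∧ x ≠ y
  symm := ⟨fun _ _ h => ⟨h.1.symm, h.2.symm⟩⟩
  loopless := ⟨fun _ h => h.2 rfl⟩

/-- The disjoint union of cliques `K_{m 0} + K_{m 1} + ⋯`. -/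
def cliquesGraph {c : ℕ} (m : Fin c → ℕ) : SimpleGraph (Σ i, Fin (m i)) where
  Adj x y := x.1 = y.1 ∧ x ≠ y
  symm := ⟨fun _ _ h => ⟨h.1.symm, h.2.symm⟩⟩
  loopless := ⟨fun _ h => h.2 rfl⟩

/-- `G` is `t`-tough: whenever deleting a vertex set `S` disconnects the graph,
`|S| ≥ t · c(G - S)`. -/
def IsTTough {V : Type*} [Fintype V] (t : ℝ) (G : SimpleGraph V) : Prop :=
  ∀ S : Finset V, ¬ (G.induce ((S : Set V)ᶜ)).Connected →
    t * Nat.card (G.induce ((S : Set V)ᶜ)).ConnectedComponent ≤ (S.card : ℝ)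

/-- `W⁽²⁾(G) = Σ_{i<j} d(i,j)²`, i.e. half the sum of all squared distances. -/
noncomputable def wienerIndexSq {V : Type*} [Fintype V] (G : SimpleGraph V) : ℝ :=
  (∑ i, ∑ j, (G.dist i j : ℝ) ^ 2) / 2

section Stmt7Aux

variable {V : Type*} [Fintype V] [DecidableEq V] {A : Matrix V V ℝ} (hA : A.IsHermitian)

lemma stmt7_row_orth (i j : V) :
    ∑ k, (hA.eigenvectorUnitary : Matrix V V ℝ) i k * (hA.eigenvectorUnitary : Matrix V V ℝ) j k
      = if i = j then 1 else 0 := by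
  have h := Matrix.mem_unitaryGroup_iff.mp hA.eigenvectorUnitary.2
  have h2 := congrFun (congrFun h i) j
  simpa [Matrix.mul_apply, Matrix.one_apply, Matrix.star_apply] using h2

lemma stmt7_trace_eq : A.trace = ∑ k, hA.eigenvalues k := by
  conv_lhs => rw [hA.spectral_theorem, Unitary.conjStarAlgAut_apply]
  rw [Matrix.trace_mul_cycle, Unitary.coe_star_mul_self, one_mul, Matrix.trace_diagonal]
  simp

lemma stmt7_trace_sq : (A * A).trace = ∑ k, hA.eigenvalues k ^ 2 := by
  have hUU : (hA.eigenvectorUnitary : Matrix V V ℝ) * star (hA.eigenvectorUnitary : Matrix V V ℝ) = 1 :=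
    Matrix.mem_unitaryGroup_iff.mp hA.eigenvectorUnitary.2
  conv_lhs => rw [hA.spectral_theorem, Unitary.conjStarAlgAut_apply]
  rw [show ((hA.eigenvectorUnitary : Matrix V V ℝ) * Matrix.diagonal (RCLike.ofReal ∘ hA.eigenvalues)
        * star (hA.eigenvectorUnitary : Matrix V V ℝ)) *
      ((hA.eigenvectorUnitary : Matrix V V ℝ) * Matrix.diagonal (RCLike.ofReal ∘ hA.eigenvalues)
        * star (hA.eigenvectorUnitary : Matrix V V ℝ))
      = (hA.eigenvectorUnitary : Matrix V V ℝ) *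
        (Matrix.diagonal (RCLike.ofReal ∘ hA.eigenvalues) * Matrix.diagonal (RCLike.ofReal ∘ hA.eigenvalues))
        * star (hA.eigenvectorUnitary : Matrix V V ℝ) from by
    rw [mul_assoc _ _ ((hA.eigenvectorUnitary : Matrix V V ℝ) * _ * _), ← mul_assoc (star _),
      ← mul_assoc (star _), Unitary.coe_star_mul_self, one_mul, ← mul_assoc, ← mul_assoc,
      mul_assoc _ _ (star _)]]
  rw [Matrix.trace_mul_cycle, ← mul_assoc, Unitary.coe_star_mul_self, one_mul,
    Matrix.diagonal_mul_diagonal, Matrix.trace_diagonal]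
  simp [sq]

lemma stmt7_entry (i j : V) : A i j = ∑ k, hA.eigenvalues k *
    ((hA.eigenvectorUnitary : Matrix V V ℝ) i k * (hA.eigenvectorUnitary : Matrix V V ℝ) j k) := by
  conv_lhs => rw [hA.spectral_theorem, Unitary.conjStarAlgAut_apply]
  rw [Matrix.mul_apply]
  refine Finset.sum_congr rfl fun k _ => ?_
  rw [Matrix.mul_diagonal, Matrix.star_apply]
  simp only [Function.comp_apply, RCLike.ofReal_real_eq_id, id_eq, star_trivial]
  ring

lemma stmt7_det_ne (μ : ℝ) (hμ : ∀ k, hA.eigenvalues k ≠ μ) : (A - μ • 1).det ≠ 0 := by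
  have hUU : (hA.eigenvectorUnitary : Matrix V V ℝ) * star (hA.eigenvectorUnitary : Matrix V V ℝ) = 1 :=
    Matrix.mem_unitaryGroup_iff.mp hA.eigenvectorUnitary.2
  have h1 : A - μ • 1 = (hA.eigenvectorUnitary : Matrix V V ℝ) *
      (Matrix.diagonal (fun k => hA.eigenvalues k - μ)) * star (hA.eigenvectorUnitary : Matrix V V ℝ) := by
    have : Matrix.diagonal (fun k => hA.eigenvalues k - μ)
        = Matrix.diagonal (RCLike.ofReal ∘ hA.eigenvalues) - μ • 1 := by
      ext i j
      by_cases h : i = j <;> simp [h, Matrix.diagonal_apply, Matrix.one_apply]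
    rw [this, Matrix.mul_sub, Matrix.sub_mul, ← Unitary.conjStarAlgAut_apply (S := ℝ), ← hA.spectral_theorem]
    congr 1
    rw [Matrix.mul_smul, Matrix.smul_mul, mul_one, hUU]
  rw [h1, Matrix.det_mul, Matrix.det_mul, Matrix.det_diagonal]
  have hdet : (hA.eigenvectorUnitary : Matrix V V ℝ).det * (star (hA.eigenvectorUnitary : Matrix V V ℝ)).det = 1 := by
    rw [← Matrix.det_mul, hUU, Matrix.det_one]
  intro hc
  rw [mul_comm, ← mul_assoc, mul_comm ((star (hA.eigenvectorUnitary : Matrix V V ℝ)).det)] at hc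
  rw [hdet, one_mul] at hc
  exact (Finset.prod_ne_zero_iff.mpr (fun k _ => sub_ne_zero.mpr (hμ k))) hc

lemma stmt7_eigSet :
    {μ : ℝ | ∃ v : V → ℝ, v ≠ 0 ∧ A.mulVec v = μ • v} = Set.range hA.eigenvalues := by
  ext μ
  simp only [Set.mem_setOf_eq, Set.mem_range]
  constructor
  · rintro ⟨v, hv, hAv⟩
    by_contra hμ
    push_neg at hμ
    have h0 : (A - μ • 1).mulVec v = 0 := by
      rw [Matrix.sub_mulVec, Matrix.smul_mulVec, Matrix.one_mulVec, hAv, sub_self]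
    exact hv (Matrix.eq_zero_of_mulVec_eq_zero (stmt7_det_ne hA μ hμ) h0)
  · rintro ⟨k, rfl⟩
    refine ⟨⇑(hA.eigenvectorBasis k), ?_, hA.mulVec_eigenvectorBasis k⟩
    intro h
    exact hA.eigenvectorBasis.orthonormal.ne_zero k (by ext i; exact congrFun h i)

end Stmt7Aux

theorem stmt7 {V : Type*} [Fintype V] (G : SimpleGraph V) (hG : G.Connected)
    (hn : 2 ≤ Fintype.card V) :
    distSpecRad G ≤
      Real.sqrt (2 * ((Fintype.card V : ℝ) - 1) * wienerIndexSq G / (Fintype.card V : ℝ)) ∧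
    (distSpecRad G =
        Real.sqrt (2 * ((Fintype.card V : ℝ) - 1) * wienerIndexSq G / (Fintype.card V : ℝ))
      ↔ G = ⊤) := by
  letI := Classical.decEq V
  have hV : Nonempty V := Fintype.card_pos_iff.mp (by omega)
  set N : ℝ := (Fintype.card V : ℝ) with hNdef
  clear_value N
  have hN2 : (2 : ℝ) ≤ N := by rw [hNdef]; exact_mod_cast hn
  have hN1 : (0 : ℝ) < N - 1 := by linarith
  have hN0 : (0 : ℝ) < N := by linarith
  have hNne : N ≠ 0 := ne_of_gt hN0
  have hN1ne : N - 1 ≠ 0 := ne_of_gt hN1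
  have hA : (distMatrix G).IsHermitian := by
    ext i j
    simp only [Matrix.conjTranspose_apply, star_trivial, distMatrix]
    exact_mod_cast congrArg Nat.cast (SimpleGraph.dist_comm (G := G) (u := j) (v := i))
  set ev : V → ℝ := hA.eigenvalues with hev
  clear_value ev
  set s : Finset ℝ := Finset.image ev Finset.univ with hsdef
  have hs : s.Nonempty := ⟨ev (Classical.arbitrary V), Finset.mem_image_of_mem _ (Finset.mem_univ _)⟩
  set M : ℝ := s.max' hs with hMdef
  clear_value M
  obtain ⟨k₀, -, hk₀⟩ := Finset.mem_image.mp (s.max'_mem hs)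
  rw [← hMdef] at hk₀
  have hMax : ∀ k, ev k ≤ M := fun k => by
    rw [hMdef]
    exact Finset.le_max' s _ (Finset.mem_image_of_mem _ (Finset.mem_univ k))
  have hSpec : distSpecRad G = M := by
    unfold distSpecRad
    rw [stmt7_eigSet hA, show Set.range hA.eigenvalues = (s : Set ℝ) by
      rw [hsdef]; simp [hev]]
    rw [hMdef]
    exact hs.csSup_eq_max'
  have htr0 : ∑ k, ev k = 0 := by
    rw [hev, ← stmt7_trace_eq hA, Matrix.trace]
    simp [Matrix.diag, distMatrix, SimpleGraph.dist_self]
  set Q : ℝ := ∑ i, ∑ j, (G.dist i j : ℝ) ^ 2 with hQdef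
  clear_value Q
  have hQ : ∑ k, ev k ^ 2 = Q := by
    rw [hev, ← stmt7_trace_sq hA, Matrix.trace, hQdef]
    refine Finset.sum_congr rfl fun i _ => ?_
    rw [Matrix.diag_apply, Matrix.mul_apply]
    refine Finset.sum_congr rfl fun j _ => ?_
    simp only [distMatrix, sq]
    rw [SimpleGraph.dist_comm (u := j) (v := i)]
  have hW : 2 * wienerIndexSq G = Q := by
    rw [wienerIndexSq, hQdef]; ring
  have hQ0 : (0 : ℝ) ≤ Q := by
    rw [hQdef]
    exact Finset.sum_nonneg fun i _ => Finset.sum_nonneg fun j _ => sq_nonneg _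
  have hcard_erase : ((Finset.univ.erase k₀).card : ℝ) = N - 1 := by
    rw [Finset.card_erase_of_mem (Finset.mem_univ _), Finset.card_univ, Nat.cast_sub (by omega)]
    simp [hNdef]
  have hsum_erase : ∑ k ∈ Finset.univ.erase k₀, ev k = -M := by
    have h := Finset.sum_erase_add Finset.univ ev (Finset.mem_univ k₀)
    rw [htr0, hk₀] at h
    linarith
  have hsq_erase : ∑ k ∈ Finset.univ.erase k₀, ev k ^ 2 = Q - M ^ 2 := by
    have h0 := Finset.sum_erase_add Finset.univ (fun k => ev k ^ 2) (Finset.mem_univ k₀)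
    have h : ∑ k ∈ Finset.univ.erase k₀, ev k ^ 2 + ev k₀ ^ 2 = Q := by
      rw [← hQ]; simpa using h0
    have : ev k₀ ^ 2 = M ^ 2 := by rw [hk₀]
    linarith
  have hkey : ∑ k ∈ Finset.univ.erase k₀, (ev k + M / (N - 1)) ^ 2
      = Q - N * M ^ 2 / (N - 1) := by
    have e1 : ∀ x : ℝ, (x + M / (N - 1)) ^ 2
        = x ^ 2 + (2 * (M / (N - 1))) * x + (M / (N - 1)) ^ 2 := fun x => by ring
    rw [Finset.sum_congr rfl fun k _ => e1 (ev k)]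
    rw [Finset.sum_add_distrib, Finset.sum_add_distrib, ← Finset.mul_sum, hsum_erase, hsq_erase,
      Finset.sum_const, nsmul_eq_mul, hcard_erase]
    field_simp [hNne, hN1ne]
    ring
  have hineq : N * M ^ 2 ≤ (N - 1) * Q := by
    have h0 : (0 : ℝ) ≤ ∑ k ∈ Finset.univ.erase k₀, (ev k + M / (N - 1)) ^ 2 :=
      Finset.sum_nonneg fun k _ => sq_nonneg _
    rw [hkey] at h0
    have h1 : N * M ^ 2 / (N - 1) ≤ Q := by linarith
    rw [div_le_iff₀ hN1] at h1
    linarith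
  have hM0 : (0 : ℝ) ≤ M := by
    by_contra h
    push_neg at h
    have h1 : ∑ k, ev k ≤ ∑ _k : V, M := Finset.sum_le_sum fun k _ => hMax k
    rw [htr0, Finset.sum_const, Finset.card_univ, nsmul_eq_mul] at h1
    nlinarith
  have harg : 2 * (N - 1) * wienerIndexSq G / N = (N - 1) * Q / N := by
    rw [← hW]; ring
  have hMsq : M ^ 2 ≤ (N - 1) * Q / N := by
    rw [le_div_iff₀ hN0]
    nlinarith
  have part1 : distSpecRad G ≤ Real.sqrt (2 * (N - 1) * wienerIndexSq G / N) := by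
    rw [hSpec, harg]
    calc M = Real.sqrt (M ^ 2) := (Real.sqrt_sq hM0).symm
      _ ≤ Real.sqrt ((N - 1) * Q / N) := Real.sqrt_le_sqrt hMsq
  refine ⟨part1, ?_, ?_⟩
  · -- equality → G = ⊤
    intro heq
    have hMsqEq : M ^ 2 = (N - 1) * Q / N := by
      rw [hSpec, harg] at heq
      have h0 : (0:ℝ) ≤ (N - 1) * Q / N := div_nonneg (mul_nonneg (by linarith) hQ0) (le_of_lt hN0)
      rw [heq, Real.sq_sqrt h0]
    obtain ⟨i0, j0, hij⟩ := Fintype.exists_pair_of_one_lt_card (α := V) (by omega)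
    have hdpos : 0 < G.dist i0 j0 := hG.pos_dist_of_ne hij
    have hQpos : 0 < Q := by
      have h1 : ((G.dist i0 j0 : ℝ)) ^ 2 ≤ ∑ j, ((G.dist i0 j : ℝ))^2 :=
        Finset.single_le_sum (f := fun j => ((G.dist i0 j : ℝ))^2)
          (fun j _ => sq_nonneg _) (Finset.mem_univ j0)
      have h2 : ∑ j, ((G.dist i0 j : ℝ))^2 ≤ Q := by
        rw [hQdef]
        exact Finset.single_le_sum (f := fun i => ∑ j, ((G.dist i j : ℝ))^2)
          (fun i _ => Finset.sum_nonneg fun j _ => sq_nonneg _) (Finset.mem_univ i0)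
      have h3 : (0:ℝ) < ((G.dist i0 j0 : ℝ)) ^ 2 := by
        have h4 : (0:ℝ) < (G.dist i0 j0 : ℝ) := by exact_mod_cast hdpos
        positivity
      linarith
    have hMpos : 0 < M := by
      have hM2 : 0 < M ^ 2 := by
        rw [hMsqEq]; exact div_pos (mul_pos hN1 hQpos) hN0
      nlinarith [hM2, hM0]
    have hzero : ∑ k ∈ Finset.univ.erase k₀, (ev k + M / (N - 1)) ^ 2 = 0 := by
      rw [hkey, hMsqEq]
      field_simp [hNne, hN1ne]
      ring
    set μ : ℝ := -(M / (N - 1)) with hμdef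
    clear_value μ
    have hevk : ∀ k, k ≠ k₀ → ev k = μ := by
      intro k hk
      have h := (Finset.sum_eq_zero_iff_of_nonneg (fun x _ => sq_nonneg _)).mp hzero k
        (Finset.mem_erase.mpr ⟨hk, Finset.mem_univ _⟩)
      have h3 : (ev k + M / (N - 1)) ^ 2 = 0 := by simpa using h
      have h2 : ev k + M / (N - 1) = 0 := sq_eq_zero_iff.mp h3
      rw [hμdef]; linarith
    have hμneg : μ < 0 := by
      have h := div_pos hMpos hN1
      rw [hμdef]; linarith
    obtain ⟨U, hUdef⟩ : ∃ U : Matrix V V ℝ, U = (hA.eigenvectorUnitary : Matrix V V ℝ) :=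
      ⟨_, rfl⟩
    have hentry : ∀ i j, (G.dist i j : ℝ)
        = μ * (if i = j then 1 else 0) + (M - μ) * (U i k₀ * U j k₀) := by
      intro i j
      have h : (G.dist i j : ℝ) = ∑ k, hA.eigenvalues k
          * ((hA.eigenvectorUnitary : Matrix V V ℝ) i k
          * (hA.eigenvectorUnitary : Matrix V V ℝ) j k) := stmt7_entry hA i j
      rw [← hev, ← hUdef] at h
      have horth : ∑ k, U i k * U j k = if i = j then 1 else 0 := by
        rw [hUdef]; exact stmt7_row_orth hA i j
      have h2 : ∀ k, ev k * (U i k * U j k)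
          = μ * (U i k * U j k) + (ev k - μ) * (U i k * U j k) := fun k => by ring
      rw [h, Finset.sum_congr rfl fun k _ => h2 k, Finset.sum_add_distrib, ← Finset.mul_sum,
        horth]
      congr 1
      rw [Finset.sum_eq_single k₀]
      · rw [hk₀]
      · intro k _ hk
        rw [hevk k hk, sub_self, zero_mul]
      · intro h; exact absurd (Finset.mem_univ k₀) h
    have hdiag : ∀ i, (M - μ) * (U i k₀ * U i k₀) = -μ := by
      intro i
      have h := hentry i i
      rw [if_pos rfl, SimpleGraph.dist_self] at h
      push_cast at h
      linarith
    have hoff : ∀ i j, i ≠ j → (G.dist i j : ℝ) = -μ := by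
      intro i j hij'
      have h := hentry i j
      rw [if_neg hij', mul_zero, zero_add] at h
      have hsq : (G.dist i j : ℝ) ^ 2 = μ ^ 2 := by
        have e : (G.dist i j : ℝ) ^ 2
            = ((M - μ) * (U i k₀ * U i k₀)) * ((M - μ) * (U j k₀ * U j k₀)) := by
          rw [h]; ring
        rw [e, hdiag i, hdiag j]; ring
      have hd0 : (0:ℝ) ≤ (G.dist i j : ℝ) := Nat.cast_nonneg _
      have hfac : ((G.dist i j : ℝ) + μ) * ((G.dist i j : ℝ) - μ) = 0 := by
        linear_combination hsq
      rcases mul_eq_zero.mp hfac with h' | h'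
      · linarith
      · linarith
    have hadj : ∃ a b : V, G.Adj a b := by
      obtain ⟨w⟩ := hG.preconnected i0 j0
      cases w with
      | nil => exact absurd rfl hij
      | cons h p => exact ⟨_, _, h⟩
    obtain ⟨a, b, hab⟩ := hadj
    have hμ1 : -μ = 1 := by
      have h := hoff a b hab.ne
      rw [SimpleGraph.dist_eq_one_iff_adj.mpr hab] at h
      simpa using h.symm
    ext i j
    simp only [SimpleGraph.top_adj]
    constructor
    · exact fun h => h.ne
    · intro hne
      have h := hoff i j hne
      rw [hμ1] at h
      exact SimpleGraph.dist_eq_one_iff_adj.mp (by exact_mod_cast h)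
  · -- G = ⊤ → equality
    intro h
    subst h
    have hT : ∀ i j : V, ((⊤ : SimpleGraph V).dist i j : ℝ) = if i = j then 0 else 1 := by
      intro i j
      by_cases h : i = j
      · simp [h, SimpleGraph.dist_self]
      · rw [SimpleGraph.dist_eq_one_iff_adj.mpr (by simp [h])]
        simp [h]
    have hrow : ∀ i : V, ∑ j : V, ((1 : ℝ) - if i = j then 1 else 0) = N - 1 := by
      intro i
      rw [Finset.sum_sub_distrib, Finset.sum_const, Finset.sum_ite_eq]
      simp [hNdef, Finset.card_univ]
    have h1 : ∀ i : V, ∑ j, ((⊤ : SimpleGraph V).dist i j : ℝ) ^ 2 = N - 1 := by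
      intro i
      rw [← hrow i]
      refine Finset.sum_congr rfl fun j _ => ?_
      by_cases h : i = j <;> simp [hT, h]
    have hQval : Q = N * (N - 1) := by
      rw [hQdef, Finset.sum_congr rfl fun i _ => h1 i, Finset.sum_const, Finset.card_univ,
        nsmul_eq_mul, ← hNdef]
    have hargval : 2 * (N - 1) * wienerIndexSq (⊤ : SimpleGraph V) / N = (N - 1) ^ 2 := by
      rw [harg, hQval]
      field_simp [hNne]
    have hRHS : Real.sqrt (2 * (N - 1) * wienerIndexSq (⊤ : SimpleGraph V) / N) = N - 1 := by
      rw [hargval, Real.sqrt_sq (by linarith)]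
    have hone : (distMatrix (⊤ : SimpleGraph V)).mulVec (fun _ => 1)
        = (N - 1) • (fun _ => (1 : ℝ)) := by
      funext i
      simp only [Matrix.mulVec, dotProduct, distMatrix, Pi.smul_apply, smul_eq_mul,
        mul_one]
      rw [← hrow i]
      refine Finset.sum_congr rfl fun j _ => ?_
      by_cases h : i = j <;> simp [hT, h]
    have hbdd : BddAbove {μ : ℝ | ∃ v : V → ℝ, v ≠ 0 ∧
        (distMatrix (⊤ : SimpleGraph V)).mulVec v = μ • v} := by
      rw [stmt7_eigSet hA]
      exact (Set.finite_range _).bddAbove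
    have hmem : (N - 1) ∈ {μ : ℝ | ∃ v : V → ℝ, v ≠ 0 ∧
        (distMatrix (⊤ : SimpleGraph V)).mulVec v = μ • v} := by
      refine ⟨fun _ => 1, ?_, hone⟩
      intro hcon
      have h := congrFun hcon (Classical.arbitrary V)
      norm_num at h
    have hge : N - 1 ≤ distSpecRad (⊤ : SimpleGraph V) := by
      unfold distSpecRad
      exact le_csSup hbdd hmem
    rw [hRHS]
    have hle := part1
    rw [hRHS] at hle
    linarith
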